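/- The occupation measure of any CPU policy is feasible for the base LP: if π is a stationary policy in Π_CPU, then x := Pr^∞_π satisfies the stationarity constraints ∑_{s,a} x_{sa}T(s'|s,a) = ∑_a x_{s'a}, vanishes on states outside the TSCCs of the MDP, and there exists y ≥ 0 satisfying the flow-balance constraints ∑_{s,a} y_{sa}T(s'|s,a) = ∑_a(x_{s'a}+y_{s'a}) − β_{s'}. -/

import Mathlib

open Filter

/-- A terminal strongly connected component of the directed graph with edge relation
`E`: nonempty, strongly connected, closed (no outgoing edges), and reachable from the
support of the initial distribution `β`. -/
def IsTSCC {S : Type*} (E : S → S → Prop) (β : S → ℝ) (C : Set S) : Prop :=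
  C.Nonempty ∧
  (∀ s ∈ C, ∀ s' ∈ C, Relation.ReflTransGen E s s') ∧
  (∀ s ∈ C, ∀ s', E s s' → s' ∈ C) ∧
  (∃ s₀, 0 < β s₀ ∧ ∃ s ∈ C, Relation.ReflTransGen E s₀ s)

/-- The union of all TSCC states. -/
def rSet {S : Type*} (E : S → S → Prop) (β : S → ℝ) : Set S :=
  {s | ∃ C : Set S, IsTSCC E β C ∧ s ∈ C}

/-- Edge relation of the transition graph of an MDP. -/
def mdpEdge {S A : Type*} (avail : S → Finset A) (T : S → A → S → ℝ)
    (s s' : S) : Prop :=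
  ∃ a ∈ avail s, 0 < T s a s'

/-- Edge relation of the transition graph of the Markov chain induced by policy `π`. -/
def chainEdge {S A : Type*} (avail : S → Finset A) (T : S → A → S → ℝ)
    (π : S → A → ℝ) (s s' : S) : Prop :=
  0 < ∑ a ∈ avail s, π s a * T s a s'

/-- `π` is a stationary policy: a probability distribution over `avail s` at each `s`. -/
def IsPolicy {S A : Type*} (avail : S → Finset A) (π : S → A → ℝ) : Prop :=
  (∀ s a, 0 ≤ π s a) ∧ ∀ s, ∑ a ∈ avail s, π s a = 1

/-- The multichain LP constraints: stationarity of `x`, flow balance of `y` with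
initial distribution `β`, `x` vanishing outside the TSCCs, `x ∈ [0,1]`, `y ≥ 0`. -/
def LPConstraints {S A : Type*} [Fintype S] (avail : S → Finset A)
    (T : S → A → S → ℝ) (β : S → ℝ) (x y : S → A → ℝ) : Prop :=
  (∀ s a, 0 ≤ x s a ∧ x s a ≤ 1) ∧ (∀ s a, 0 ≤ y s a) ∧
  (∀ s', ∑ s, ∑ a ∈ avail s, x s a * T s a s' = ∑ a ∈ avail s', x s' a) ∧
  (∀ s', ∑ s, ∑ a ∈ avail s, y s a * T s a s' =
      (∑ a ∈ avail s', (x s' a + y s' a)) - β s') ∧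
  (∀ s, s ∉ rSet (mdpEdge avail T) β → ∑ a ∈ avail s, x s a = 0)

/-- `π` is the policy derived from `(x,y)` by normalization. -/
def DerivedPolicy {S A : Type*} (avail : S → Finset A)
    (x y π : S → A → ℝ) : Prop :=
  (∀ s, 0 < ∑ a ∈ avail s, x s a →
      ∀ a, π s a = x s a / ∑ a' ∈ avail s, x s a') ∧
  (∀ s, ∑ a ∈ avail s, x s a = 0 → 0 < ∑ a ∈ avail s, y s a →
      ∀ a, π s a = y s a / ∑ a' ∈ avail s, y s a')

/-- `π` is class-preserving up to unichain: the recurrent set of the induced chain lies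
inside the TSCCs of the MDP, and each TSCC of the MDP contains a unique TSCC of the
induced chain. -/
def IsCPU {S A : Type*} (avail : S → Finset A) (T : S → A → S → ℝ)
    (β : S → ℝ) (π : S → A → ℝ) : Prop :=
  rSet (chainEdge avail T π) β ⊆ rSet (mdpEdge avail T) β ∧
  ∀ C : Set S, IsTSCC (mdpEdge avail T) β C →
    ∃! D : Set S, D ⊆ C ∧ IsTSCC (chainEdge avail T π) β D

/-- `π` is class-preserving: the induced chain has exactly the TSCCs of the MDP. -/
def IsCP {S A : Type*} (avail : S → Finset A) (T : S → A → S → ℝ)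
    (β : S → ℝ) (π : S → A → ℝ) : Prop :=
  rSet (chainEdge avail T π) β = rSet (mdpEdge avail T) β ∧
  ∀ C : Set S, IsTSCC (mdpEdge avail T) β C ↔ IsTSCC (chainEdge avail T π) β C

/-- `π` is edge-preserving: it plays every available action on the TSCC states of the
MDP and its induced recurrent set equals that of the MDP. -/
def IsEP {S A : Type*} (avail : S → Finset A) (T : S → A → S → ℝ)
    (β : S → ℝ) (π : S → A → ℝ) : Prop :=
  rSet (chainEdge avail T π) β = rSet (mdpEdge avail T) β ∧
  ∀ s ∈ rSet (mdpEdge avail T) β, ∀ a ∈ avail s, 0 < π s a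


section AuxLemmas
set_option linter.unusedSectionVars false
open Matrix Relation

/-- From any vertex of a finite directed graph one can reach a closed strongly
connected component. -/
lemma exists_sink_component {S : Type*} [Fintype S] (E : S → S → Prop) (w : S) :
    ∃ C : Set S, C.Nonempty ∧
      (∀ s ∈ C, ∀ s' ∈ C, Relation.ReflTransGen E s s') ∧
      (∀ s ∈ C, ∀ s', E s s' → s' ∈ C) ∧
      ∃ r ∈ C, Relation.ReflTransGen E w r := by
  classical
  set F : S → Set S := fun u => {v | Relation.ReflTransGen E u v} with hF
  obtain ⟨u₀, hu₀mem, hmin⟩ := Finset.exists_min_image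
    (Finset.univ.filter (fun u => Relation.ReflTransGen E w u))
    (fun u => (F u).ncard) ⟨w, by simp [Relation.ReflTransGen.refl]⟩
  have hu₀w : Relation.ReflTransGen E w u₀ := by
    simpa using hu₀mem
  have hkey : ∀ u, Relation.ReflTransGen E u₀ u → F u = F u₀ := by
    intro u hu
    have hsub : F u ⊆ F u₀ := fun v hv => hu.trans hv
    have hle : (F u₀).ncard ≤ (F u).ncard := by
      apply hmin
      simp only [Finset.mem_filter, Finset.mem_univ, true_and]
      exact hu₀w.trans hu
    exact Set.eq_of_subset_of_ncard_le hsub hle (Set.toFinite _)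
  refine ⟨F u₀, ⟨u₀, Relation.ReflTransGen.refl⟩, ?_, ?_, ⟨u₀, Relation.ReflTransGen.refl, hu₀w⟩⟩
  · intro s hs s' hs'
    have := hkey s hs
    rw [← this] at hs'
    exact hs'
  · intro s hs s' hss'
    have := hkey s hs
    rw [← this]
    exact Relation.ReflTransGen.single hss'

variable {S : Type*} [Fintype S] [DecidableEq S]

lemma icc_pow_sum (Tπ : Matrix S S ℝ) (n : ℕ) :
    ∑ t ∈ Finset.Icc 1 n, Tπ ^ t = ∑ t ∈ Finset.range n, Tπ ^ (t + 1) := by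
  rw [← Finset.Ico_add_one_right_eq_Icc, Finset.sum_Ico_eq_sum_range]
  simp [add_comm 1]

section ces
variable {Tπ Tinf : Matrix S S ℝ}
  (hces : Tendsto (fun n : ℕ => (n : ℝ)⁻¹ • ∑ t ∈ Finset.Icc 1 n, Tπ ^ t)
      atTop (nhds Tinf))
  (hpow0 : ∀ t : ℕ, ∀ s s', 0 ≤ (Tπ ^ t) s s')
  (hpow1 : ∀ t : ℕ, ∀ s s', (Tπ ^ t) s s' ≤ 1)

include hces

lemma tinf_entry (s' s : S) :
    Tendsto (fun n : ℕ => (n : ℝ)⁻¹ * ∑ t ∈ Finset.Icc 1 n, (Tπ ^ t) s' s)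
      atTop (nhds (Tinf s' s)) := by
  have h1 := (tendsto_pi_nhds.mp hces) s'
  have h2 := (tendsto_pi_nhds.mp h1) s
  convert h2 using 2 with n
  simp [Matrix.smul_apply, Matrix.sum_apply]

include hpow0 hpow1

lemma tinf_mul_right : Tinf * Tπ = Tinf := by
  have hmul : Tendsto (fun n : ℕ => ((n : ℝ)⁻¹ • ∑ t ∈ Finset.Icc 1 n, Tπ ^ t) * Tπ)
      atTop (nhds (Tinf * Tπ)) := by
    have : Continuous (fun M : Matrix S S ℝ => M * Tπ) :=
      Continuous.matrix_mul continuous_id continuous_const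
    exact (this.tendsto _).comp hces
  have herr : Tendsto (fun n : ℕ => (n : ℝ)⁻¹ • (Tπ ^ (n + 1) - Tπ))
      atTop (nhds (0 : Matrix S S ℝ)) := by
    apply tendsto_pi_nhds.mpr
    intro s
    rw [tendsto_pi_nhds]
    intro s'
    have hg : Tendsto (fun n : ℕ => (n : ℝ)⁻¹ * 2) atTop (nhds 0) := by
      have := (tendsto_inv_atTop_nhds_zero_nat).mul_const (2:ℝ)
      simpa using this
    refine squeeze_zero_norm (fun n => ?_) hg
    · have : |(Tπ ^ (n + 1)) s s' - Tπ s s'| ≤ 2 := by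
        have h1 := hpow0 (n+1) s s'
        have h2 := hpow1 (n+1) s s'
        have h3 := hpow0 1 s s'
        have h4 := hpow1 1 s s'
        rw [pow_one] at h3 h4
        rw [abs_le]; constructor <;> nlinarith
      have hn : (0:ℝ) ≤ (n:ℝ)⁻¹ := by positivity
      simp only [Matrix.smul_apply, Matrix.sub_apply, Matrix.zero_apply, smul_eq_mul]
      calc ‖(n : ℝ)⁻¹ * ((Tπ ^ (n + 1)) s s' - Tπ s s')‖
          = (n:ℝ)⁻¹ * |(Tπ ^ (n + 1)) s s' - Tπ s s'| := by
            rw [Real.norm_eq_abs, abs_mul, abs_of_nonneg hn]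
        _ ≤ (n:ℝ)⁻¹ * 2 := by nlinarith
  have heq : ∀ n : ℕ, ((n : ℝ)⁻¹ • ∑ t ∈ Finset.Icc 1 n, Tπ ^ t) * Tπ =
      ((n : ℝ)⁻¹ • ∑ t ∈ Finset.Icc 1 n, Tπ ^ t) + (n : ℝ)⁻¹ • (Tπ ^ (n + 1) - Tπ) := by
    intro n
    rw [Matrix.smul_mul, icc_pow_sum, ← smul_add]
    congr 1
    rw [Finset.sum_mul]
    have h1 : ∑ t ∈ Finset.range n, Tπ ^ (t + 1) * Tπ
        = ∑ t ∈ Finset.range n, Tπ ^ (t + 1 + 1) := by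
      apply Finset.sum_congr rfl; intro t _; rw [← pow_succ]
    rw [h1]
    have h2 : ∑ t ∈ Finset.range (n+1), Tπ ^ (t + 1)
        = ∑ t ∈ Finset.range n, Tπ ^ (t + 1) + Tπ ^ (n + 1) := Finset.sum_range_succ _ _
    have h3 : ∑ t ∈ Finset.range (n+1), Tπ ^ (t + 1)
        = Tπ ^ 1 + ∑ t ∈ Finset.range n, Tπ ^ (t + 1 + 1) := by
      rw [Finset.sum_range_succ']
      rw [zero_add, pow_one]
      abel
    rw [← sub_eq_iff_eq_add'] at h3
    rw [← h3, h2, pow_one]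
    abel
  have hmul2 : Tendsto (fun n : ℕ => ((n : ℝ)⁻¹ • ∑ t ∈ Finset.Icc 1 n, Tπ ^ t) * Tπ)
      atTop (nhds Tinf) := by
    have := hces.add herr
    rw [add_zero] at this
    exact this.congr (fun n => (heq n).symm)
  exact tendsto_nhds_unique hmul hmul2
end ces

section ces2
variable {Tπ Tinf : Matrix S S ℝ}
  (hces : Tendsto (fun n : ℕ => (n : ℝ)⁻¹ • ∑ t ∈ Finset.Icc 1 n, Tπ ^ t)
      atTop (nhds Tinf))
  (hpow0 : ∀ t : ℕ, ∀ s s', 0 ≤ (Tπ ^ t) s s')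
  (hpow1 : ∀ t : ℕ, ∀ s s', (Tπ ^ t) s s' ≤ 1)

include hces hpow0 hpow1

lemma tπ_mul_tinf : Tπ * Tinf = Tinf := by
  have hcomm : ∀ n : ℕ, Tπ * ((n : ℝ)⁻¹ • ∑ t ∈ Finset.Icc 1 n, Tπ ^ t)
      = ((n : ℝ)⁻¹ • ∑ t ∈ Finset.Icc 1 n, Tπ ^ t) * Tπ := by
    intro n
    rw [Matrix.mul_smul, Matrix.smul_mul, Finset.mul_sum, Finset.sum_mul]
    congr 1
    apply Finset.sum_congr rfl
    intro t _
    exact (Commute.pow_right (Commute.refl Tπ) t).symm ▸ (pow_mul_comm' Tπ t) ▸ rfl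
  have h1 : Tendsto (fun n : ℕ => Tπ * ((n : ℝ)⁻¹ • ∑ t ∈ Finset.Icc 1 n, Tπ ^ t))
      atTop (nhds (Tπ * Tinf)) := by
    have : Continuous (fun M : Matrix S S ℝ => Tπ * M) :=
      Continuous.matrix_mul continuous_const continuous_id
    exact (this.tendsto _).comp hces
  have h2 : Tendsto (fun n : ℕ => ((n : ℝ)⁻¹ • ∑ t ∈ Finset.Icc 1 n, Tπ ^ t) * Tπ)
      atTop (nhds (Tinf * Tπ)) := by
    have : Continuous (fun M : Matrix S S ℝ => M * Tπ) :=
      Continuous.matrix_mul continuous_id continuous_const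
    exact (this.tendsto _).comp hces
  have h3 := tendsto_nhds_unique (h1.congr hcomm) h2
  rw [h3, tinf_mul_right hces hpow0 hpow1]

lemma tinf_idem : Tinf * Tinf = Tinf := by
  have hpowinf : ∀ t : ℕ, Tπ ^ t * Tinf = Tinf := by
    intro t
    induction t with
    | zero => rw [pow_zero, one_mul]
    | succ t ih => rw [pow_succ, mul_assoc, tπ_mul_tinf hces hpow0 hpow1, ih]
  have h1 : Tendsto (fun n : ℕ => ((n : ℝ)⁻¹ • ∑ t ∈ Finset.Icc 1 n, Tπ ^ t) * Tinf)
      atTop (nhds (Tinf * Tinf)) := by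
    have : Continuous (fun M : Matrix S S ℝ => M * Tinf) :=
      Continuous.matrix_mul continuous_id continuous_const
    exact (this.tendsto _).comp hces
  have h2 : ∀ n : ℕ, 1 ≤ n → ((n : ℝ)⁻¹ • ∑ t ∈ Finset.Icc 1 n, Tπ ^ t) * Tinf = Tinf := by
    intro n hn
    rw [Matrix.smul_mul, Finset.sum_mul]
    simp only [hpowinf]
    rw [Finset.sum_const, Nat.card_Icc]
    simp only [Nat.add_sub_cancel]
    rw [← Nat.cast_smul_eq_nsmul ℝ, smul_smul, inv_mul_cancel₀, one_smul]
    have : (0:ℝ) < n := by exact_mod_cast (by omega : 0 < n)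
    exact this.ne'
  have h3 : Tendsto (fun n : ℕ => ((n : ℝ)⁻¹ • ∑ t ∈ Finset.Icc 1 n, Tπ ^ t) * Tinf)
      atTop (nhds Tinf) := by
    apply Tendsto.congr' _ (tendsto_const_nhds (x := Tinf))
    filter_upwards [Filter.Ici_mem_atTop 1] with n hn
    exact (h2 n hn).symm
  exact tendsto_nhds_unique h1 h3
end ces2


lemma vecMul_smul_matrix (v : S → ℝ) (a : ℝ) (M : Matrix S S ℝ) :
    v ᵥ* (a • M) = a • (v ᵥ* M) := by
  ext s
  simp only [Matrix.vecMul, dotProduct, Matrix.smul_apply, Pi.smul_apply,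
    smul_eq_mul, Finset.mul_sum]
  apply Finset.sum_congr rfl
  intro i _
  ring

lemma vecMul_sum_matrix {ι : Type*} (v : S → ℝ) (F : ι → Matrix S S ℝ) (t : Finset ι) :
    v ᵥ* (∑ i ∈ t, F i) = ∑ i ∈ t, v ᵥ* F i := by
  ext s
  simp only [Matrix.vecMul, dotProduct, Finset.sum_apply, Matrix.sum_apply,
    Finset.mul_sum]
  rw [Finset.sum_comm]

section fund
variable {Tπ Tinf : Matrix S S ℝ}
  (hces : Tendsto (fun n : ℕ => (n : ℝ)⁻¹ • ∑ t ∈ Finset.Icc 1 n, Tπ ^ t)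
      atTop (nhds Tinf))
  (hTT : Tπ * Tinf = Tinf) (hTinfT : Tinf * Tπ = Tinf) (hII : Tinf * Tinf = Tinf)

include hces hTT hTinfT hII

lemma fund_det_ne_zero : (1 - Tπ + Tinf).det ≠ 0 := by
  intro hdet
  obtain ⟨v, hv0, hv⟩ := (Matrix.exists_vecMul_eq_zero_iff).mpr hdet
  rw [Matrix.vecMul_add, Matrix.vecMul_sub, Matrix.vecMul_one] at hv
  have hvTinf : v ᵥ* Tinf = 0 := by
    have h2 := congrArg (fun w => w ᵥ* Tinf) hv
    simp only [Matrix.add_vecMul, Matrix.sub_vecMul, Matrix.vecMul_vecMul,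
      Matrix.zero_vecMul, hTT, hII] at h2
    -- h2 : v ᵥ* Tinf - v ᵥ* Tinf + v ᵥ* Tinf = 0
    linear_combination (norm := abel_nf) h2
  have hfix : v ᵥ* Tπ = v := by
    have := hv
    rw [hvTinf, add_zero, sub_eq_zero] at this
    exact this.symm
  have hfixpow : ∀ t : ℕ, v ᵥ* (Tπ ^ t) = v := by
    intro t
    induction t with
    | zero => simp [Matrix.vecMul_one]
    | succ t ih => rw [pow_succ, ← Matrix.vecMul_vecMul, ih, hfix]
  have hA : ∀ n : ℕ, 1 ≤ n → v ᵥ* ((n : ℝ)⁻¹ • ∑ t ∈ Finset.Icc 1 n, Tπ ^ t) = v := by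
    intro n hn
    rw [vecMul_smul_matrix, vecMul_sum_matrix]
    simp only [hfixpow]
    rw [Finset.sum_const, Nat.card_Icc, Nat.add_sub_cancel,
      ← Nat.cast_smul_eq_nsmul ℝ, smul_smul, inv_mul_cancel₀, one_smul]
    have : (0:ℝ) < n := by exact_mod_cast (by omega : 0 < n)
    exact this.ne'
  have h1 : Tendsto (fun n : ℕ => v ᵥ* ((n : ℝ)⁻¹ • ∑ t ∈ Finset.Icc 1 n, Tπ ^ t))
      atTop (nhds (v ᵥ* Tinf)) := by
    have : Continuous (fun M : Matrix S S ℝ => v ᵥ* M) :=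
      Continuous.matrix_vecMul continuous_const continuous_id
    exact (this.tendsto _).comp hces
  have h2 : Tendsto (fun n : ℕ => v ᵥ* ((n : ℝ)⁻¹ • ∑ t ∈ Finset.Icc 1 n, Tπ ^ t))
      atTop (nhds v) := by
    apply Tendsto.congr' _ (tendsto_const_nhds (x := v))
    filter_upwards [Filter.Ici_mem_atTop 1] with n hn
    exact (hA n hn).symm
  have := tendsto_nhds_unique h1 h2
  rw [hvTinf] at this
  exact hv0 this.symm
end fund


lemma vecMul_smul_matrix' (v : S → ℝ) (a : ℝ) (M : Matrix S S ℝ) :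
    v ᵥ* (a • M) = a • (v ᵥ* M) := by
  ext s
  simp only [Matrix.vecMul, dotProduct, Matrix.smul_apply, Pi.smul_apply,
    smul_eq_mul, Finset.mul_sum]
  exact Finset.sum_congr rfl fun i _ => by ring

lemma vecMul_sum_matrix' {ι : Type*} (v : S → ℝ) (F : ι → Matrix S S ℝ) (t : Finset ι) :
    v ᵥ* (∑ i ∈ t, F i) = ∑ i ∈ t, v ᵥ* F i := by
  ext s
  simp only [Matrix.vecMul, dotProduct, Finset.sum_apply, Matrix.sum_apply,
    Finset.mul_sum]
  rw [Finset.sum_comm]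

section zinv
variable {Tπ Tinf : Matrix S S ℝ}
  (hces : Tendsto (fun n : ℕ => (n : ℝ)⁻¹ • ∑ t ∈ Finset.Icc 1 n, Tπ ^ t)
      atTop (nhds Tinf))
  (hTT : Tπ * Tinf = Tinf) (hTinfT : Tinf * Tπ = Tinf) (hII : Tinf * Tinf = Tinf)
  (hZunit : IsUnit (1 - Tπ + Tinf).det)
  (hpow0 : ∀ t : ℕ, ∀ s s', 0 ≤ (Tπ ^ t) s s')

include hces hTT hTinfT hII hZunit hpow0

lemma bZinv_nonneg (β : S → ℝ) (hβ0 : ∀ s, 0 ≤ β s) (s : S)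
    (hμ : (β ᵥ* Tinf) s = 0) : 0 ≤ (β ᵥ* (1 - Tπ + Tinf)⁻¹) s := by
  set Z : Matrix S S ℝ := 1 - Tπ + Tinf with hZ
  set W : Matrix S S ℝ := Tπ - Tinf with hWdef
  have hpowT : ∀ m : ℕ, Tπ ^ m * Tinf = Tinf := by
    intro m
    induction m with
    | zero => rw [pow_zero, one_mul]
    | succ m ih => rw [pow_succ, mul_assoc, hTT, ih]
  have hW : ∀ m : ℕ, 1 ≤ m → W ^ m = Tπ ^ m - Tinf := by
    intro m hm
    induction m with
    | zero => omega
    | succ m ih =>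
      rcases Nat.eq_or_lt_of_le hm with h1 | h1
      · rw [← h1]; simp [hWdef]
      · have hm1 : 1 ≤ m := by omega
        rw [pow_succ, ih hm1, hWdef, sub_mul, mul_sub, mul_sub, hpowT, hTinfT, hII, ← pow_succ]
        abel
  have hgeom : ∀ m : ℕ, (∑ t ∈ Finset.range m, W ^ t) * Z = 1 - W ^ m := by
    intro m
    have h1 : Z = -(W - 1) := by rw [hZ, hWdef]; abel
    rw [h1, mul_neg, geom_sum_mul]
    abel
  set B : ℕ → Matrix S S ℝ :=
    fun n => (n : ℝ)⁻¹ • ∑ m ∈ Finset.Icc 1 n, (∑ t ∈ Finset.range m, W ^ t) with hB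
  have hBZ : ∀ n : ℕ, 1 ≤ n →
      B n * Z = (1 + Tinf) - (n : ℝ)⁻¹ • ∑ t ∈ Finset.Icc 1 n, Tπ ^ t := by
    intro n hn
    rw [hB, Matrix.smul_mul, Finset.sum_mul]
    have h2 : ∀ m ∈ Finset.Icc 1 n, (∑ t ∈ Finset.range m, W ^ t) * Z
        = (1 + Tinf) - Tπ ^ m := by
      intro m hm
      rw [hgeom, hW m (Finset.mem_Icc.mp hm).1]
      abel
    rw [Finset.sum_congr rfl h2, Finset.sum_sub_distrib, Finset.sum_const,
      Nat.card_Icc, Nat.add_sub_cancel, smul_sub,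
      ← Nat.cast_smul_eq_nsmul ℝ, smul_smul, inv_mul_cancel₀, one_smul]
    have : (0:ℝ) < n := by exact_mod_cast (by omega : 0 < n)
    exact this.ne'
  have hBZtend : Tendsto (fun n => B n * Z) atTop (nhds 1) := by
    have h3 : Tendsto (fun n : ℕ =>
        (1 + Tinf) - (n : ℝ)⁻¹ • ∑ t ∈ Finset.Icc 1 n, Tπ ^ t) atTop
        (nhds ((1 + Tinf) - Tinf)) := tendsto_const_nhds.sub hces
    have h4 : (1 + Tinf) - Tinf = (1 : Matrix S S ℝ) := by abel
    rw [h4] at h3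
    apply Tendsto.congr' _ h3
    filter_upwards [Filter.Ici_mem_atTop 1] with n hn
    exact (hBZ n hn).symm
  have hZZinv : Z * Z⁻¹ = 1 := Matrix.mul_nonsing_inv Z hZunit
  have hBtend : Tendsto B atTop (nhds Z⁻¹) := by
    have h5 : Tendsto (fun n => (B n * Z) * Z⁻¹) atTop (nhds (1 * Z⁻¹)) := by
      have : Continuous (fun M : Matrix S S ℝ => M * Z⁻¹) :=
        Continuous.matrix_mul continuous_id continuous_const
      exact (this.tendsto _).comp hBZtend
    rw [one_mul] at h5
    apply h5.congr
    intro n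
    rw [mul_assoc, hZZinv, mul_one]
  have hentry : Tendsto (fun n => (β ᵥ* B n) s) atTop (nhds ((β ᵥ* Z⁻¹) s)) := by
    have : Continuous (fun M : Matrix S S ℝ => (β ᵥ* M) s) :=
      (continuous_apply s).comp (Continuous.matrix_vecMul continuous_const continuous_id)
    exact (this.tendsto _).comp hBtend
  apply ge_of_tendsto' hentry
  intro n
  rw [hB, vecMul_smul_matrix', vecMul_sum_matrix']
  simp only [Pi.smul_apply, Finset.sum_apply, smul_eq_mul]
  apply mul_nonneg (by positivity)
  apply Finset.sum_nonneg
  intro m hm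
  rw [vecMul_sum_matrix']
  simp only [Finset.sum_apply]
  apply Finset.sum_nonneg
  intro t _
  rcases Nat.eq_zero_or_pos t with ht | ht
  · subst ht
    simp only [pow_zero, Matrix.vecMul_one]
    exact hβ0 s
  · rw [hW t ht, Matrix.vecMul_sub]
    simp only [Pi.sub_apply, hμ, sub_zero]
    rw [Matrix.vecMul]
    apply Finset.sum_nonneg
    intro i _
    exact mul_nonneg (hβ0 i) (hpow0 t i s)
end zinv

lemma tinf_entry' {Tπ Tinf : Matrix S S ℝ}
    (hces : Tendsto (fun n : ℕ => (n : ℝ)⁻¹ • ∑ t ∈ Finset.Icc 1 n, Tπ ^ t)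
      atTop (nhds Tinf)) (s' s : S) :
    Tendsto (fun n : ℕ => (n : ℝ)⁻¹ * ∑ t ∈ Finset.Icc 1 n, (Tπ ^ t) s' s)
      atTop (nhds (Tinf s' s)) := by
  have h1 := (tendsto_pi_nhds.mp hces) s'
  have h2 := (tendsto_pi_nhds.mp h1) s
  convert h2 using 2 with n
  simp [Matrix.smul_apply, Matrix.sum_apply]

lemma vecmul_tinf_eq_zero {Tπ Tinf : Matrix S S ℝ}
    (hces : Tendsto (fun n : ℕ => (n : ℝ)⁻¹ • ∑ t ∈ Finset.Icc 1 n, Tπ ^ t)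
      atTop (nhds Tinf))
    (hT0 : ∀ s s', 0 ≤ Tπ s s')
    (hrow : ∀ s, ∑ s', Tπ s s' = 1)
    (β : S → ℝ) (hβ0 : ∀ s, 0 ≤ β s) (hβ1 : ∑ s, β s = 1)
    (E : S → S → Prop) (hE : ∀ s s', E s s' ↔ 0 < Tπ s s')
    (s : S) (hs : s ∉ rSet E β) : ∑ s', β s' * Tinf s' s = 0 := by
  classical
  have hSne : Nonempty S := by
    rcases isEmpty_or_nonempty S with h | h
    · rw [Finset.univ_eq_empty, Finset.sum_empty] at hβ1; norm_num at hβ1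
    · exact h
  -- power facts
  have hpow0 : ∀ (t : ℕ) (u v : S), 0 ≤ (Tπ ^ t) u v := by
    intro t
    induction t with
    | zero => intro u v; rw [pow_zero]; by_cases h : u = v <;> simp [Matrix.one_apply, h]
    | succ t ih =>
      intro u v
      rw [pow_succ, Matrix.mul_apply]
      exact Finset.sum_nonneg fun w _ => mul_nonneg (ih u w) (hT0 w v)
  have hpowrow : ∀ (t : ℕ) (u : S), ∑ v, (Tπ ^ t) u v = 1 := by
    intro t
    induction t with
    | zero => intro u; simp [pow_zero, Matrix.one_apply]
    | succ t ih =>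
      intro u
      simp only [pow_succ, Matrix.mul_apply]
      rw [Finset.sum_comm]
      have : ∀ w, ∑ v, (Tπ ^ t) u w * Tπ w v = (Tπ ^ t) u w := by
        intro w; rw [← Finset.mul_sum, hrow, mul_one]
      rw [Finset.sum_congr rfl fun w _ => this w, ih]
  -- reachability vs positivity
  have hreach : ∀ (t : ℕ) (u v : S), 0 < (Tπ ^ t) u v → Relation.ReflTransGen E u v := by
    intro t
    induction t with
    | zero =>
      intro u v h
      rw [pow_zero, Matrix.one_apply] at h
      by_cases huv : u = v
      · exact huv ▸ Relation.ReflTransGen.refl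
      · simp [huv] at h
    | succ t ih =>
      intro u v h
      rw [pow_succ, Matrix.mul_apply] at h
      have : ∃ w, 0 < (Tπ ^ t) u w * Tπ w v := by
        by_contra hc
        push_neg at hc
        have : ∑ w, (Tπ ^ t) u w * Tπ w v ≤ 0 := Finset.sum_nonpos fun w _ => hc w
        linarith
      obtain ⟨w, hw⟩ := this
      have h1 : 0 < (Tπ ^ t) u w := by
        rcases (mul_pos_iff.mp hw) with ⟨h1, _⟩ | ⟨h1, h2⟩
        · exact h1
        · exact absurd h2 (not_lt.mpr (hT0 w v))
      have h2 : 0 < Tπ w v := by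
        rcases (mul_pos_iff.mp hw) with ⟨_, h2⟩ | ⟨h1, _⟩
        · exact h2
        · exact absurd h1 (not_lt.mpr (hpow0 t u w))
      exact (ih u w h1).tail ((hE w v).mpr h2)
  have hpathpos : ∀ u v : S, Relation.ReflTransGen E u v → ∃ t : ℕ, 0 < (Tπ ^ t) u v := by
    intro u v h
    induction h with
    | refl => exact ⟨0, by simp [pow_zero, Matrix.one_apply]⟩
    | @tail w v huw hwv ih =>
      obtain ⟨t, ht⟩ := ih
      refine ⟨t + 1, ?_⟩
      rw [pow_succ, Matrix.mul_apply]
      have hterm : 0 < (Tπ ^ t) u w * Tπ w v := mul_pos ht ((hE w v).mp hwv)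
      have : (Tπ ^ t) u w * Tπ w v ≤ ∑ z, (Tπ ^ t) u z * Tπ z v :=
        Finset.single_le_sum (fun z _ => mul_nonneg (hpow0 t u z) (hT0 z v))
          (Finset.mem_univ w)
      linarith
  set R : Set S := rSet E β with hR
  have hRclosed : ∀ u ∈ R, ∀ v, E u v → v ∈ R := by
    rintro u ⟨C, hC, huC⟩ v huv
    exact ⟨C, hC, hC.2.2.1 u huC v huv⟩
  have hescape : ∀ u : S, (∃ s₀, 0 < β s₀ ∧ Relation.ReflTransGen E s₀ u) →
      ∃ r ∈ R, Relation.ReflTransGen E u r := by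
    rintro u ⟨s₀, hs₀, hs₀u⟩
    obtain ⟨C, hCne, hCsc, hCcl, r, hrC, hur⟩ := exists_sink_component E u
    refine ⟨r, ⟨C, ⟨hCne, hCsc, hCcl, ⟨s₀, hs₀, r, hrC, hs₀u.trans hur⟩⟩, hrC⟩, hur⟩
  -- indicator and hitting function
  set χ : S → ℝ := fun u => if u ∈ R then 1 else 0 with hχ
  set h : ℕ → S → ℝ := fun j => (Tπ ^ j) *ᵥ χ with hh
  have hχ0 : ∀ u, 0 ≤ χ u := fun u => by by_cases hu : u ∈ R <;> simp [hχ, hu]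
  have hχ1 : ∀ u, χ u ≤ 1 := fun u => by by_cases hu : u ∈ R <;> simp [hχ, hu]
  have hh_apply : ∀ j u, h j u = ∑ w, (Tπ ^ j) u w * χ w := by
    intro j u; rw [hh]; simp [Matrix.mulVec, dotProduct]
  have hh0 : ∀ u, h 0 u = χ u := by
    intro u; rw [hh_apply]; simp [Matrix.one_apply]
  have hhnneg : ∀ j u, 0 ≤ h j u := by
    intro j u
    rw [hh_apply]
    exact Finset.sum_nonneg fun w _ => mul_nonneg (hpow0 j u w) (hχ0 w)
  have hhle1 : ∀ j u, h j u ≤ 1 := by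
    intro j u
    rw [hh_apply]
    calc ∑ w, (Tπ ^ j) u w * χ w ≤ ∑ w, (Tπ ^ j) u w :=
          Finset.sum_le_sum fun w _ => by
            have := hpow0 j u w
            nlinarith [hχ1 w]
      _ = 1 := hpowrow j u
  have hstep : ∀ u, χ u ≤ (Tπ *ᵥ χ) u := by
    intro u
    by_cases hu : u ∈ R
    · have hz : ∀ w, w ∉ R → Tπ u w = 0 := by
        intro w hw
        by_contra hc
        have : 0 < Tπ u w := lt_of_le_of_ne (hT0 u w) (Ne.symm hc)
        exact hw (hRclosed u hu w ((hE u w).mpr this))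
      have : (Tπ *ᵥ χ) u = ∑ w, Tπ u w := by
        simp only [Matrix.mulVec, dotProduct]
        apply Finset.sum_congr rfl
        intro w _
        by_cases hw : w ∈ R
        · simp [hχ, hw]
        · simp [hχ, hw, hz w hw]
      rw [this, hrow]
      simp [hχ, hu]
    · have : 0 ≤ (Tπ *ᵥ χ) u := by
        simp only [Matrix.mulVec, dotProduct]
        exact Finset.sum_nonneg fun w _ => mul_nonneg (hT0 u w) (hχ0 w)
      simpa [hχ, hu] using this
  have hmonoV : ∀ (j : ℕ) (f g : S → ℝ), (∀ u, f u ≤ g u) →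
      ∀ u, ((Tπ ^ j) *ᵥ f) u ≤ ((Tπ ^ j) *ᵥ g) u := by
    intro j f g hfg u
    simp only [Matrix.mulVec, dotProduct]
    exact Finset.sum_le_sum fun w _ =>
      mul_le_mul_of_nonneg_left (hfg w) (hpow0 j u w)
  have hhmono : ∀ u, Monotone (fun j => h j u) := by
    intro u
    apply monotone_nat_of_le_succ
    intro j
    have hsucc : h (j+1) = (Tπ ^ j) *ᵥ (Tπ *ᵥ χ) := by
      show (Tπ ^ (j+1)) *ᵥ χ = _
      rw [pow_succ, Matrix.mulVec_mulVec]
    rw [hsucc]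
    exact hmonoV j χ _ hstep u
  -- transient reachable states
  set TR : Finset S := Finset.univ.filter
    (fun u => u ∉ R ∧ ∃ s₀, 0 < β s₀ ∧ Relation.ReflTransGen E s₀ u) with hTR
  have hTRpos : ∀ u : S, ∃ t : ℕ, u ∈ TR → 0 < h t u := by
    intro u
    by_cases hu : u ∈ TR
    · rw [hTR, Finset.mem_filter] at hu
      obtain ⟨r, hrR, hur⟩ := hescape u hu.2.2
      obtain ⟨t, ht⟩ := hpathpos u r hur
      refine ⟨t, fun _ => ?_⟩
      rw [hh_apply]
      have h1 : (Tπ ^ t) u r * χ r ≤ ∑ w, (Tπ ^ t) u w * χ w :=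
        Finset.single_le_sum (fun w _ => mul_nonneg (hpow0 t u w) (hχ0 w))
          (Finset.mem_univ r)
      have h2 : χ r = 1 := by simp [hχ, hrR]
      rw [h2, mul_one] at h1
      linarith
    · exact ⟨0, fun hc => absurd hc hu⟩
  choose tfun htfun using hTRpos
  set k : ℕ := Finset.univ.sup tfun with hk
  have hhk : ∀ u ∈ TR, 0 < h k u := by
    intro u hu
    exact lt_of_lt_of_le (htfun u hu) (hhmono u (Finset.le_sup (Finset.mem_univ u)))
  set δ : ℝ := Finset.univ.inf' Finset.univ_nonempty
    (fun u => if u ∈ TR then h k u else 1) with hδ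
  have hδpos : 0 < δ := by
    rw [hδ, Finset.lt_inf'_iff]
    intro u _
    by_cases hu : u ∈ TR
    · simpa [hu] using hhk u hu
    · simp [hu]
  have hδle : ∀ u ∈ TR, δ ≤ h k u := by
    intro u hu
    have h2 : δ ≤ (if u ∈ TR then h k u else 1) :=
      Finset.inf'_le (fun u => if u ∈ TR then h k u else 1) (Finset.mem_univ u)
    rwa [if_pos hu] at h2
  have hδ1 : δ ≤ 1 := by
    obtain ⟨u⟩ := hSne
    have h2 : δ ≤ (if u ∈ TR then h k u else 1) :=
      Finset.inf'_le (fun u => if u ∈ TR then h k u else 1) (Finset.mem_univ u)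
    by_cases hu : u ∈ TR
    · rw [if_pos hu] at h2
      exact h2.trans (hhle1 k u)
    · rwa [if_neg hu] at h2
  -- mass on transient states
  set b : ℕ → S → ℝ := fun t u => ∑ w, β w * (Tπ ^ t) w u with hb
  have hb0 : ∀ t u, 0 ≤ b t u := by
    intro t u
    exact Finset.sum_nonneg fun w _ => mul_nonneg (hβ0 w) (hpow0 t w u)
  have hbshift : ∀ t j u, b (t + j) u = ∑ w, b t w * (Tπ ^ j) w u := by
    intro t j u
    rw [hb]
    simp only [pow_add, Matrix.mul_apply]
    simp only [Finset.mul_sum, Finset.sum_mul]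
    rw [Finset.sum_comm]
    exact Finset.sum_congr rfl fun w _ => Finset.sum_congr rfl fun z _ => by ring
  have hbzero : ∀ t u, u ∉ R → u ∉ TR → b t u = 0 := by
    intro t u huR huTR
    rw [hb]
    apply Finset.sum_eq_zero
    intro w _
    by_contra hc
    have hpos : 0 < β w * (Tπ ^ t) w u :=
      lt_of_le_of_ne (mul_nonneg (hβ0 w) (hpow0 t w u)) (Ne.symm hc)
    rcases mul_pos_iff.mp hpos with ⟨h1, h2⟩ | ⟨h1, _⟩
    · exact huTR (by rw [hTR, Finset.mem_filter]
                     exact ⟨Finset.mem_univ u, huR, w, h1, hreach t w u h2⟩)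
    · exact absurd h1 (not_lt.mpr (hβ0 w))
  set m : ℕ → ℝ := fun t => ∑ u, b t u * (1 - χ u) with hm
  have hm0 : ∀ t, 0 ≤ m t := by
    intro t
    apply Finset.sum_nonneg
    intro u _
    exact mul_nonneg (hb0 t u) (by have := hχ1 u; linarith)
  have hmrep : ∀ t j, m (t + j) = ∑ u, b t u * (1 - h j u) := by
    intro t j
    rw [hm]
    simp only [hbshift t j]
    simp only [Finset.sum_mul]
    rw [Finset.sum_comm]
    apply Finset.sum_congr rfl
    intro u _
    rw [hh_apply]
    have : ∑ w, b t u * (Tπ ^ j) u w * (1 - χ w)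
        = b t u * (1 - ∑ w, (Tπ ^ j) u w * χ w) := by
      have hterm : ∀ w, b t u * (Tπ ^ j) u w * (1 - χ w)
          = b t u * (Tπ ^ j) u w - b t u * ((Tπ ^ j) u w * χ w) := fun w => by ring
      rw [Finset.sum_congr rfl (fun w _ => hterm w), Finset.sum_sub_distrib,
        ← Finset.mul_sum, ← Finset.mul_sum, hpowrow j u]
      ring
    rw [← this]
  have hmdec : ∀ t j, m (t + j) ≤ m t := by
    intro t j
    rw [hmrep, hm]
    apply Finset.sum_le_sum
    intro u _
    apply mul_le_mul_of_nonneg_left _ (hb0 t u)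
    have : χ u ≤ h j u := by rw [← hh0 u]; exact hhmono u (Nat.zero_le j)
    linarith
  have hmk : ∀ t, m (t + k) ≤ (1 - δ) * m t := by
    intro t
    rw [hmrep, hm, Finset.mul_sum]
    apply Finset.sum_le_sum
    intro u _
    by_cases huR : u ∈ R
    · have h1 : h k u = 1 := le_antisymm (hhle1 k u) (by
        have : χ u ≤ h k u := by rw [← hh0 u]; exact hhmono u (Nat.zero_le k)
        have hcu : χ u = 1 := by simp [hχ, huR]
        linarith)
      have hcu : χ u = 1 := by simp [hχ, huR]
      rw [h1, hcu]
      simp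
    · by_cases huTR : u ∈ TR
      · have hcu : χ u = 0 := by simp [hχ, huR]
        rw [hcu]
        have h2 := hδle u huTR
        have h3 := hb0 t u
        have h4 := hhle1 k u
        nlinarith
      · rw [hbzero t u huR huTR]
        simp
  have hiter : ∀ n : ℕ, m (n * k) ≤ (1 - δ) ^ n * m 0 := by
    intro n
    induction n with
    | zero => simp
    | succ n ih =>
      have h1 : m ((n + 1) * k) ≤ (1 - δ) * m (n * k) := by
        have := hmk (n * k)
        rw [Nat.succ_mul]
        exact this
      calc m ((n + 1) * k) ≤ (1 - δ) * m (n * k) := h1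
        _ ≤ (1 - δ) * ((1 - δ) ^ n * m 0) :=
            mul_le_mul_of_nonneg_left ih (by linarith)
        _ = (1 - δ) ^ (n + 1) * m 0 := by ring
  have hmtend : Tendsto m atTop (nhds 0) := by
    rcases Nat.eq_zero_or_pos k with hk0 | hkpos
    · have : ∀ t, m t = 0 := by
        intro t
        have := hmk t
        rw [hk0, Nat.add_zero] at this
        have h1 := hm0 t
        nlinarith
      rw [show m = (fun _ => (0:ℝ)) from funext this]
      exact tendsto_const_nhds
    · have hbound : ∀ t, m t ≤ (1 - δ) ^ (t / k) * m 0 := by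
        intro t
        have h1 : t / k * k ≤ t := Nat.div_mul_le_self t k
        have h2 : m t ≤ m (t / k * k) := by
          have ht : t = t / k * k + (t - t / k * k) := by omega
          conv_lhs => rw [ht]
          exact hmdec _ _
        calc m t ≤ m (t / k * k) := h2
          _ = m ((t / k) * k) := rfl
          _ ≤ (1 - δ) ^ (t / k) * m 0 := hiter (t / k)
      apply squeeze_zero hm0 hbound
      have hdiv : Tendsto (fun t : ℕ => t / k) atTop atTop := by
        apply Filter.tendsto_atTop_atTop.mpr
        intro c
        exact ⟨c * k, fun t ht => (Nat.le_div_iff_mul_le hkpos).mpr ht⟩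
      have hpowtend : Tendsto (fun n : ℕ => (1 - δ) ^ n) atTop (nhds 0) :=
        tendsto_pow_atTop_nhds_zero_of_lt_one (by linarith) (by linarith)
      have := (hpowtend.comp hdiv).mul_const (m 0)
      simpa using this
  -- Cesàro average of m tends to 0
  have hcesm : Tendsto (fun n : ℕ => (n : ℝ)⁻¹ * ∑ t ∈ Finset.Icc 1 n, m t)
      atTop (nhds 0) := by
    have h1 : Tendsto (fun i : ℕ => m (1 + i)) atTop (nhds 0) :=
      hmtend.comp (tendsto_add_atTop_nat 1 |>.congr (fun n => by omega))
    have h2 := h1.cesaro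
    apply h2.congr
    intro n
    congr 1
    rw [← Finset.Ico_add_one_right_eq_Icc, Finset.sum_Ico_eq_sum_range]
    simp
  -- the entry limit
  have hbs : Tendsto (fun n : ℕ => (n : ℝ)⁻¹ * ∑ t ∈ Finset.Icc 1 n, b t s)
      atTop (nhds (∑ s', β s' * Tinf s' s)) := by
    have h1 : ∀ n : ℕ, (n : ℝ)⁻¹ * ∑ t ∈ Finset.Icc 1 n, b t s
        = ∑ s', β s' * ((n : ℝ)⁻¹ * ∑ t ∈ Finset.Icc 1 n, (Tπ ^ t) s' s) := by
      intro n
      rw [hb]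
      rw [Finset.sum_comm, Finset.mul_sum]
      apply Finset.sum_congr rfl
      intro w _
      simp only [Finset.mul_sum]
      exact Finset.sum_congr rfl fun t _ => by ring
    rw [funext h1]
    exact tendsto_finset_sum _ fun w _ => (tinf_entry' hces w s).const_mul (β w)
  have hble : ∀ t, b t s ≤ m t := by
    intro t
    have hcs : χ s = 0 := by simp [hχ, hs]
    have : b t s * (1 - χ s) ≤ ∑ u, b t u * (1 - χ u) :=
      Finset.single_le_sum (f := fun u => b t u * (1 - χ u))
        (fun u _ => mul_nonneg (hb0 t u) (by have := hχ1 u; linarith))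
        (Finset.mem_univ s)
    rw [hcs] at this
    simpa using this
  have hube : ∀ n : ℕ, (n : ℝ)⁻¹ * ∑ t ∈ Finset.Icc 1 n, b t s
      ≤ (n : ℝ)⁻¹ * ∑ t ∈ Finset.Icc 1 n, m t := by
    intro n
    apply mul_le_mul_of_nonneg_left _ (by positivity)
    exact Finset.sum_le_sum fun t _ => hble t
  have hge : 0 ≤ ∑ s', β s' * Tinf s' s := by
    apply ge_of_tendsto' hbs
    intro n
    apply mul_nonneg (by positivity)
    exact Finset.sum_nonneg fun t _ => hb0 t s
  have hle : ∑ s', β s' * Tinf s' s ≤ 0 :=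
    le_of_tendsto_of_tendsto' hbs hcesm hube
  linarith

end AuxLemmas

open Matrix

/-- The occupation measure of any CPU policy is feasible for the base LP:
with `x_{sa} := Pr^∞_π(s,a) = (β^⊤T_π^∞)_s π(a|s)`, the vector `x` satisfies the
stationarity constraints, vanishes on states outside the TSCCs of the MDP, and there
exists `y ≥ 0` satisfying the flow-balance constraints. -/
theorem occupation_measure_lp_feasible {S A : Type*} [Fintype S] [DecidableEq S]
    (avail : S → Finset A) (T : S → A → S → ℝ) (β : S → ℝ) (π : S → A → ℝ)
    (hT0 : ∀ s a s', 0 ≤ T s a s')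
    (hT1 : ∀ s, ∀ a ∈ avail s, ∑ s', T s a s' = 1)
    (hβ0 : ∀ s, 0 ≤ β s) (hβ1 : ∑ s, β s = 1)
    (hpol : IsPolicy avail π)
    (hCPU : IsCPU avail T β π)
    (Tπ : Matrix S S ℝ)
    (hTπ : ∀ s s', Tπ s s' = ∑ a ∈ avail s, π s a * T s a s')
    (Tinf : Matrix S S ℝ)
    (hces : Tendsto (fun n : ℕ => (n : ℝ)⁻¹ • ∑ t ∈ Finset.Icc 1 n, Tπ ^ t)
      atTop (nhds Tinf))
    (x : S → A → ℝ)
    (hx : ∀ s a, x s a = (∑ s', β s' * Tinf s' s) * π s a) :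
    (∀ s', ∑ s, ∑ a ∈ avail s, x s a * T s a s' = ∑ a ∈ avail s', x s' a) ∧
    (∀ s, s ∉ rSet (mdpEdge avail T) β → ∑ a ∈ avail s, x s a = 0) ∧
    (∃ y : S → A → ℝ, (∀ s a, 0 ≤ y s a) ∧
      ∀ s', ∑ s, ∑ a ∈ avail s, y s a * T s a s' =
        (∑ a ∈ avail s', (x s' a + y s' a)) - β s') := by
  classical
  set μv : S → ℝ := fun u => ∑ s', β s' * Tinf s' u with hμv
  -- basic facts about Tπ
  have hTπ0 : ∀ s s', 0 ≤ Tπ s s' := by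
    intro s s'
    rw [hTπ]
    exact Finset.sum_nonneg fun a _ => mul_nonneg (hpol.1 s a) (hT0 s a s')
  have hrowTπ : ∀ s, ∑ s', Tπ s s' = 1 := by
    intro s
    have : ∑ s', Tπ s s' = ∑ a ∈ avail s, π s a * ∑ s', T s a s' := by
      simp only [hTπ, Finset.mul_sum]
      rw [Finset.sum_comm]
    rw [this]
    rw [Finset.sum_congr rfl fun a ha => by rw [hT1 s a ha, mul_one]]
    exact hpol.2 s
  have hpow0 : ∀ (t : ℕ) (u v : S), 0 ≤ (Tπ ^ t) u v := by
    intro t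
    induction t with
    | zero => intro u v; rw [pow_zero]; by_cases h : u = v <;> simp [Matrix.one_apply, h]
    | succ t ih =>
      intro u v
      rw [pow_succ, Matrix.mul_apply]
      exact Finset.sum_nonneg fun w _ => mul_nonneg (ih u w) (hTπ0 w v)
  have hpowrow : ∀ (t : ℕ) (u : S), ∑ v, (Tπ ^ t) u v = 1 := by
    intro t
    induction t with
    | zero => intro u; simp [pow_zero, Matrix.one_apply]
    | succ t ih =>
      intro u
      simp only [pow_succ, Matrix.mul_apply]
      rw [Finset.sum_comm]
      have : ∀ w, ∑ v, (Tπ ^ t) u w * Tπ w v = (Tπ ^ t) u w := by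
        intro w; rw [← Finset.mul_sum, hrowTπ, mul_one]
      rw [Finset.sum_congr rfl fun w _ => this w, ih]
  have hpow1 : ∀ (t : ℕ) (u v : S), (Tπ ^ t) u v ≤ 1 := by
    intro t u v
    have h1 : (Tπ ^ t) u v ≤ ∑ w, (Tπ ^ t) u w :=
      Finset.single_le_sum (fun w _ => hpow0 t u w) (Finset.mem_univ v)
    rw [hpowrow t u] at h1
    exact h1
  have hTinfT : Tinf * Tπ = Tinf := tinf_mul_right hces hpow0 hpow1
  have hTT : Tπ * Tinf = Tinf := tπ_mul_tinf hces hpow0 hpow1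
  have hII : Tinf * Tinf = Tinf := tinf_idem hces hpow0 hpow1
  have hxs : ∀ s, ∑ a ∈ avail s, x s a = μv s := by
    intro s
    simp only [hx]
    rw [← Finset.mul_sum, hpol.2 s, mul_one]
  -- Part 1 : stationarity
  have hpart1 : ∀ s', ∑ s, ∑ a ∈ avail s, x s a * T s a s' = ∑ a ∈ avail s', x s' a := by
    intro s'
    have hinner : ∀ s, ∑ a ∈ avail s, x s a * T s a s' = μv s * Tπ s s' := by
      intro s
      rw [hTπ, Finset.mul_sum]
      exact Finset.sum_congr rfl fun a _ => by rw [hx]; ring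
    rw [Finset.sum_congr rfl fun s _ => hinner s, hxs s']
    calc ∑ s, μv s * Tπ s s'
        = ∑ s, ∑ s₀, β s₀ * Tinf s₀ s * Tπ s s' := by
          apply Finset.sum_congr rfl
          intro s _
          rw [hμv, Finset.sum_mul]
      _ = ∑ s₀, ∑ s, β s₀ * Tinf s₀ s * Tπ s s' := Finset.sum_comm
      _ = ∑ s₀, β s₀ * (Tinf * Tπ) s₀ s' := by
          apply Finset.sum_congr rfl
          intro s₀ _
          rw [Matrix.mul_apply, Finset.mul_sum]
          exact Finset.sum_congr rfl fun s _ => by ring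
      _ = μv s' := by rw [hTinfT, hμv]
  refine ⟨hpart1, ?_, ?_⟩
  -- Part 2 : vanishing outside TSCCs
  · intro s hsm
    have hsE : s ∉ rSet (chainEdge avail T π) β := fun hc => hsm (hCPU.1 hc)
    have hE : ∀ u v, chainEdge avail T π u v ↔ 0 < Tπ u v := by
      intro u v
      rw [chainEdge, hTπ]
    have := vecmul_tinf_eq_zero hces hTπ0 hrowTπ β hβ0 hβ1
      (chainEdge avail T π) hE s hsE
    rw [hxs s]
    exact this
  -- Part 3 : flow balance
  · have hdet : (1 - Tπ + Tinf).det ≠ 0 := fund_det_ne_zero hces hTT hTinfT hII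
    have hZunit : IsUnit (1 - Tπ + Tinf).det := isUnit_iff_ne_zero.mpr hdet
    set Z : Matrix S S ℝ := 1 - Tπ + Tinf with hZdef
    have hZZ : Z * Z⁻¹ = 1 := Matrix.mul_nonsing_inv Z hZunit
    have hZZ' : Z⁻¹ * Z = 1 := Matrix.nonsing_inv_mul Z hZunit
    have hμvec : μv = β ᵥ* Tinf := by
      funext u
      rw [hμv]
      simp [Matrix.vecMul, dotProduct]
    set g : S → ℝ := β ᵥ* Z⁻¹ with hg
    have hgZ : g ᵥ* Z = β := by
      rw [hg, Matrix.vecMul_vecMul, hZZ', Matrix.vecMul_one]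
    have hZTinf : Z * Tinf = Tinf := by
      rw [hZdef, Matrix.add_mul, Matrix.sub_mul, Matrix.one_mul, hTT, hII]
      abel
    have hZinvTinf : Z⁻¹ * Tinf = Tinf := by
      have h1 : Z⁻¹ * (Z * Tinf) = Z⁻¹ * Tinf := by rw [hZTinf]
      rw [← Matrix.mul_assoc, hZZ', Matrix.one_mul] at h1
      exact h1.symm
    have hgTinf : g ᵥ* Tinf = μv := by
      rw [hg, Matrix.vecMul_vecMul, hZinvTinf, hμvec]
    have hμTπ : μv ᵥ* Tπ = μv := by
      rw [hμvec, Matrix.vecMul_vecMul, hTinfT]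
    -- nonnegativity of μv
    have hTinf0 : ∀ u v, 0 ≤ Tinf u v := by
      intro u v
      apply ge_of_tendsto' (tinf_entry' hces u v)
      intro n
      exact mul_nonneg (by positivity)
        (Finset.sum_nonneg fun t _ => hpow0 t u v)
    have hμv0 : ∀ u, 0 ≤ μv u := by
      intro u
      rw [hμv]
      exact Finset.sum_nonneg fun w _ => mul_nonneg (hβ0 w) (hTinf0 w u)
    -- the constant c
    set c : ℝ := ∑ u, (if 0 < μv u then |g u - μv u| / μv u else 0) with hc
    set ν : S → ℝ := fun u => g u + (c - 1) * μv u with hν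
    have hν0 : ∀ u, 0 ≤ ν u := by
      intro u
      have hnn : ∀ w ∈ Finset.univ (α := S),
          0 ≤ (if 0 < μv w then |g w - μv w| / μv w else 0) := by
        intro w _
        by_cases h : 0 < μv w
        · rw [if_pos h]; positivity
        · rw [if_neg h]
      rcases lt_or_eq_of_le (hμv0 u) with hpos | heq
      · have hterm : |g u - μv u| / μv u ≤ c := by
          have h1 := Finset.single_le_sum
            (f := fun w => if 0 < μv w then |g w - μv w| / μv w else 0)
            hnn (Finset.mem_univ u)
          rw [hc]
          simpa [hpos] using h1
        have h2 : |g u - μv u| ≤ c * μv u := by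
          have := mul_le_mul_of_nonneg_right hterm (le_of_lt hpos)
          rwa [div_mul_cancel₀ _ (ne_of_gt hpos)] at this
        show 0 ≤ g u + (c - 1) * μv u
        have h4 := neg_abs_le (g u - μv u)
        nlinarith
      · have hzero : (β ᵥ* Tinf) u = 0 := by
          rw [← hμvec, ← heq]
        have hgnn : 0 ≤ g u :=
          bZinv_nonneg hces hTT hTinfT hII hZunit hpow0 β hβ0 u hzero
        show 0 ≤ g u + (c - 1) * μv u
        rw [← heq]
        simpa using hgnn
    have hTπeq : Tπ = 1 - Z + Tinf := by rw [hZdef]; abel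
    have hgTπ : g ᵥ* Tπ = g - β + μv := by
      rw [hTπeq, Matrix.vecMul_add, Matrix.vecMul_sub, Matrix.vecMul_one, hgZ, hgTinf]
    have hνfun : ν = g + (c - 1) • μv := by
      funext u
      rw [hν]
      simp [smul_eq_mul]
    have hνTπ : ν ᵥ* Tπ = (g - β + μv) + (c - 1) • μv := by
      rw [hνfun, Matrix.add_vecMul, Matrix.smul_vecMul, hgTπ, hμTπ]
    refine ⟨fun s a => ν s * π s a, ?_, ?_⟩
    · intro s a
      exact mul_nonneg (hν0 s) (hpol.1 s a)
    · intro s'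
      have hLHS : ∑ s, ∑ a ∈ avail s, (ν s * π s a) * T s a s' = (ν ᵥ* Tπ) s' := by
        have h1 : ∀ s, ∑ a ∈ avail s, (ν s * π s a) * T s a s' = ν s * Tπ s s' := by
          intro s
          rw [hTπ, Finset.mul_sum]
          exact Finset.sum_congr rfl fun a _ => by ring
        rw [Finset.sum_congr rfl fun s _ => h1 s]
        simp [Matrix.vecMul, dotProduct]
      have hys : ∑ a ∈ avail s', ν s' * π s' a = ν s' := by
        rw [← Finset.mul_sum, hpol.2 s', mul_one]
      rw [hLHS, hνTπ]
      rw [Finset.sum_add_distrib, hxs s', hys]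
      simp only [Pi.add_apply, Pi.sub_apply, Pi.smul_apply, smul_eq_mul]
      rw [hν]
      ring
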